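/- Let A be the set of pairs (ℓ, q) ∈ V* ⊕ S²V* with V = ℂ³, basis e₀,e₁,e₂, dual basis x₀,x₁,x₂, such that the pairing ℓ(e₀) + ⟨q, e₁e₂⟩ = 0 (i.e. A is the hyperplane orthogonal to (e₀, e₁e₂) in V* ⊕ S²V*, which is 8-dimensional). Suppose Q ∈ S²V and C ∈ S³V are such that for every (ℓ, q) ∈ A, the vector ℓ⌟Q + q⌟C ∈ V is a scalar multiple of a fixed nonzero v ∈ V. Then Q is a multiple of v² and C is a multiple of v³. -/

import Mathlib

open MvPolynomial

noncomputable def monomialDeriv {m : ℕ} (α : Fin m →₀ ℕ) (T : MvPolynomial (Fin m) ℂ) :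
    MvPolynomial (Fin m) ℂ :=
  (List.finRange m).foldl (fun p i => (fun q => MvPolynomial.pderiv i q)^[α i] p) T

noncomputable def contract {m : ℕ} (Q T : MvPolynomial (Fin m) ℂ) :
    MvPolynomial (Fin m) ℂ :=
  Q.support.sum fun α => Q.coeff α • monomialDeriv α T

lemma contract_monomial {m : ℕ} (d : Fin m →₀ ℕ) (c : ℂ) (T : MvPolynomial (Fin m) ℂ) :
    contract (monomial d c) T = c • monomialDeriv d T := by
  unfold contract
  rcases eq_or_ne c 0 with rfl | hc
  · simp
  · rw [support_monomial, if_neg hc, Finset.sum_singleton, coeff_monomial, if_pos rfl]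

lemma contract_zero {m : ℕ} (T : MvPolynomial (Fin m) ℂ) : contract 0 T = 0 := by
  simp [contract]

lemma mdD3 (i : Fin 3) (T : MvPolynomial (Fin 3) ℂ) :
    monomialDeriv (Finsupp.single i 1) T = pderiv i T := by
  fin_cases i <;>
    simp [monomialDeriv, List.finRange_succ, Finsupp.single_apply]

lemma mdD2 (i j : Fin 3) (hij : i ≤ j) (T : MvPolynomial (Fin 3) ℂ) :
    monomialDeriv (Finsupp.single i 1 + Finsupp.single j 1) T = pderiv j (pderiv i T) := by
  fin_cases i <;> fin_cases j <;>
    simp_all [monomialDeriv, List.finRange_succ, Finsupp.single_apply]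

lemma deg3 (d : Fin 3 →₀ ℕ) : d.degree = d 0 + d 1 + d 2 := by
  rw [Finsupp.degree_apply, show ∑ i ∈ d.support, d i = ∑ i : Fin 3, d i from
    Finset.sum_subset (Finset.subset_univ _) (fun x _ hx => Finsupp.notMem_support_iff.mp hx),
    Fin.sum_univ_three]

lemma pderiv_comm {p : MvPolynomial (Fin 3) ℂ} (i j : Fin 3) :
    pderiv i (pderiv j p) = pderiv j (pderiv i p) := by
  rcases eq_or_ne i j with rfl | hij
  · rfl
  · rw [p.as_sum]
    simp only [map_sum]
    apply Finset.sum_congr rfl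
    intro d _
    rw [pderiv_monomial, pderiv_monomial, pderiv_monomial, pderiv_monomial]
    rw [Finsupp.tsub_apply, Finsupp.tsub_apply, Finsupp.single_apply, Finsupp.single_apply,
      if_neg (by exact fun h => hij (h ▸ rfl)), if_neg (by exact fun h => hij (h ▸ rfl))]
    rw [tsub_right_comm]
    congr 1
    simp only [Nat.sub_zero]
    ring

lemma X_mul_pderiv_monomial (i : Fin 3) (d : Fin 3 →₀ ℕ) (c : ℂ) :
    X i * pderiv i (monomial d c) = monomial d (c * d i) := by
  rw [pderiv_monomial]
  rcases Nat.eq_zero_or_pos (d i) with h0 | h0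
  · simp [h0]
  · rw [X, monomial_mul, one_mul, add_tsub_cancel_of_le]
    rwa [Finsupp.single_le_iff]

lemma euler {n : ℕ} {p : MvPolynomial (Fin 3) ℂ} (hp : p.IsHomogeneous n) :
    ∑ i : Fin 3, X i * pderiv i p = (n : ℂ) • p := by
  conv_lhs => rw [p.as_sum]
  conv_rhs => rw [p.as_sum]
  simp only [map_sum, Finset.mul_sum, Finset.smul_sum]
  rw [Finset.sum_comm]
  apply Finset.sum_congr rfl
  intro d hd
  have hdeg : (d 0 : ℂ) + d 1 + d 2 = (n : ℂ) := by
    have h1 := hp (mem_support_iff.mp hd)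
    rw [Pi.one_def, ← Finsupp.degree_eq_weight_one, deg3 d] at h1
    push_cast [← h1]
    ring
  rw [Fin.sum_univ_three, _root_.X_mul_pderiv_monomial, _root_.X_mul_pderiv_monomial, _root_.X_mul_pderiv_monomial,
    smul_monomial, ← map_add, ← map_add]
  congr 1
  push_cast
  rw [← hdeg, smul_eq_mul]
  ring

lemma pderiv_isHomog {n : ℕ} {p : MvPolynomial (Fin 3) ℂ} (hp : p.IsHomogeneous (n + 1))
    (i : Fin 3) : (pderiv i p).IsHomogeneous n := by
  conv => rw [p.as_sum]
  rw [map_sum]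
  apply IsHomogeneous.sum
  intro d hd
  rw [pderiv_monomial]
  rcases Nat.eq_zero_or_pos (d i) with h0 | h0
  · simp [h0, isHomogeneous_zero]
  · apply isHomogeneous_monomial
    have hdn : d.degree = n + 1 := by
      rw [Finsupp.degree_eq_weight_one]; exact hp (mem_support_iff.mp hd)
    rw [deg3] at hdn ⊢
    simp only [Finsupp.tsub_apply, Finsupp.single_apply]
    fin_cases i <;> simp_all <;> omega

lemma eq_zero_of_pderiv_eq_zero {n : ℕ} {p : MvPolynomial (Fin 3) ℂ}
    (hp : p.IsHomogeneous (n + 1)) (h : ∀ i, pderiv i p = 0) : p = 0 := by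
  have he := euler hp
  simp only [h, mul_zero, Finset.sum_const_zero] at he
  have h2 : ((n : ℂ) + 1) • p = 0 := by push_cast at he; exact he.symm
  have hne : ((n : ℂ) + 1) ≠ 0 := Nat.cast_add_one_ne_zero n
  exact (smul_eq_zero.mp h2).resolve_left hne

lemma eq_of_pderiv2 {P1 P2 : MvPolynomial (Fin 3) ℂ} (h1 : P1.IsHomogeneous 2)
    (h2 : P2.IsHomogeneous 2)
    (hd : ∀ i j : Fin 3, pderiv i (pderiv j P1) = pderiv i (pderiv j P2)) : P1 = P2 := by
  rw [← sub_eq_zero]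
  have hs : (P1 - P2).IsHomogeneous 2 := h1.sub h2
  have h10 : ∀ j, pderiv j (P1 - P2) = 0 := by
    intro j
    apply eq_zero_of_pderiv_eq_zero (n := 0) (pderiv_isHomog hs j)
    intro i
    rw [map_sub, map_sub, hd i j, sub_self]
  exact eq_zero_of_pderiv_eq_zero (n := 1) hs h10

lemma eq_of_pderiv3 {P1 P2 : MvPolynomial (Fin 3) ℂ} (h1 : P1.IsHomogeneous 3)
    (h2 : P2.IsHomogeneous 3)
    (hd : ∀ i j k : Fin 3, pderiv i (pderiv j (pderiv k P1)) = pderiv i (pderiv j (pderiv k P2))) :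
    P1 = P2 := by
  rw [← sub_eq_zero]
  have hs : (P1 - P2).IsHomogeneous 3 := h1.sub h2
  apply eq_zero_of_pderiv_eq_zero (n := 2) hs
  intro k
  apply eq_zero_of_pderiv_eq_zero (n := 1) (pderiv_isHomog hs k)
  intro j
  apply eq_zero_of_pderiv_eq_zero (n := 0) (pderiv_isHomog (pderiv_isHomog hs k) j)
  intro i
  rw [map_sub, map_sub, map_sub, hd i j k, sub_self]

set_option maxHeartbeats 2000000 in
theorem stmt18 (v : Fin 3 → ℂ) (hv : v ≠ 0)
    (Q C : MvPolynomial (Fin 3) ℂ) (hQ : Q.IsHomogeneous 2) (hC : C.IsHomogeneous 3)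
    (h : ∀ ℓ q : MvPolynomial (Fin 3) ℂ, ℓ.IsHomogeneous 1 → q.IsHomogeneous 2 →
      contract ℓ (X 0) + contract q (X 1 * X 2) = 0 →
      ∃ a : ℂ, contract ℓ Q + contract q C =
        a • (∑ i, v i • (X i : MvPolynomial (Fin 3) ℂ))) :
    (∃ a : ℂ, Q = a • (∑ i, v i • (X i : MvPolynomial (Fin 3) ℂ)) ^ 2) ∧
    (∃ b : ℂ, C = b • (∑ i, v i • (X i : MvPolynomial (Fin 3) ℂ)) ^ 3) := by
  set L : MvPolynomial (Fin 3) ℂ := ∑ i, v i • (X i : MvPolynomial (Fin 3) ℂ) with hLdef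
  have hL : ∀ k : Fin 3, pderiv k L = MvPolynomial.C (v k) := by
    intro k
    rw [hLdef, Fin.sum_univ_three]
    fin_cases k <;>
      simp [smul_eq_C_mul, pderiv_X_self, pderiv_X_of_ne, Fin.ext_iff, mul_comm]
  have hLhom : L.IsHomogeneous 1 := by
    rw [hLdef]
    apply IsHomogeneous.sum
    intro i _
    rw [smul_eq_C_mul]
    exact isHomogeneous_C_mul_X _ _
  -- instances of h
  have app1 : ∀ i : Fin 3, i ≠ 0 → ∃ a : ℂ, pderiv i Q = a • L := by
    intro i hi
    obtain ⟨a, ha⟩ := h (monomial (Finsupp.single i 1) 1) 0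
      (isHomogeneous_monomial 1
        (by rw [deg3]; fin_cases i <;> simp [Finsupp.single_apply, Fin.ext_iff]))
      (isHomogeneous_zero _ _ _)
      (by rw [contract_zero, add_zero, contract_monomial, mdD3, one_smul]
          fin_cases i <;>
            first
            | exact absurd rfl hi
            | simp [pderiv_X_of_ne, Fin.ext_iff])
    refine ⟨a, ?_⟩
    rwa [contract_zero, add_zero, contract_monomial, mdD3, one_smul] at ha
  have app2 : ∀ i j : Fin 3, i ≤ j → ¬(i = 1 ∧ j = 2) →
      ∃ lam : ℂ, pderiv j (pderiv i C) = lam • L := by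
    intro i j hij hne
    obtain ⟨lam, hl⟩ := h 0 (monomial (Finsupp.single i 1 + Finsupp.single j 1) 1)
      (isHomogeneous_zero _ _ _)
      (isHomogeneous_monomial 1
        (by rw [deg3]
            fin_cases i <;> fin_cases j <;>
              simp [Finsupp.single_apply, Fin.ext_iff]))
      (by rw [contract_zero, zero_add, contract_monomial, mdD2 _ _ hij, one_smul]
          fin_cases i <;> fin_cases j <;>
            first
            | exact absurd hij (by decide)
            | exact absurd (by decide) hne
            | simp [pderiv_mul, pderiv_X_self, pderiv_X_of_ne, Fin.ext_iff])
    refine ⟨lam, ?_⟩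
    rwa [contract_zero, zero_add, contract_monomial, mdD2 _ _ hij, one_smul] at hl
  have appm : ∃ mu : ℂ, pderiv 0 Q - pderiv 2 (pderiv 1 C) = mu • L := by
    obtain ⟨mu, hm⟩ := h (monomial (Finsupp.single 0 1) 1)
      (monomial (Finsupp.single 1 1 + Finsupp.single 2 1) (-1))
      (isHomogeneous_monomial (d := Finsupp.single 0 1) 1
        (by rw [deg3]; norm_num [Finsupp.single_apply, Fin.ext_iff]))
      (isHomogeneous_monomial (d := Finsupp.single 1 1 + Finsupp.single 2 1) (-1)
        (by rw [deg3]; norm_num [Finsupp.single_apply, Fin.ext_iff]))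
      (by rw [contract_monomial, contract_monomial, mdD3, mdD2 _ _ (by decide), one_smul]
          simp [pderiv_mul, pderiv_X_self, pderiv_X_of_ne, Fin.ext_iff])
    refine ⟨mu, ?_⟩
    rw [contract_monomial, contract_monomial, mdD3, mdD2 _ _ (by decide), one_smul] at hm
    rw [← hm, neg_one_smul]
    ring
  obtain ⟨a1, ha1⟩ := app1 1 (by decide)
  obtain ⟨a2, ha2⟩ := app1 2 (by decide)
  obtain ⟨l00, h00⟩ := app2 0 0 (by decide) (by decide)
  obtain ⟨l01, h01⟩ := app2 0 1 (by decide) (by decide)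
  obtain ⟨l02, h02⟩ := app2 0 2 (by decide) (by decide)
  obtain ⟨l11, h11⟩ := app2 1 1 (by decide) (by decide)
  obtain ⟨l22, h22⟩ := app2 2 2 (by decide) (by decide)
  obtain ⟨mu, hmix⟩ := appm
  have hD : ∀ (k : Fin 3) (p : MvPolynomial (Fin 3) ℂ) (lam : ℂ), p = lam • L →
      pderiv k p = MvPolynomial.C (lam * v k) := by
    intro k p lam hp
    rw [hp, smul_eq_C_mul, pderiv_C_mul, hL k, ← map_mul]
  have P00 : ∀ k, pderiv k (pderiv 0 (pderiv 0 C)) = MvPolynomial.C (l00 * v k) :=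
    fun k => hD k _ _ h00
  have P01 : ∀ k, pderiv k (pderiv 1 (pderiv 0 C)) = MvPolynomial.C (l01 * v k) :=
    fun k => hD k _ _ h01
  have P02 : ∀ k, pderiv k (pderiv 2 (pderiv 0 C)) = MvPolynomial.C (l02 * v k) :=
    fun k => hD k _ _ h02
  have P11 : ∀ k, pderiv k (pderiv 1 (pderiv 1 C)) = MvPolynomial.C (l11 * v k) :=
    fun k => hD k _ _ h11
  have P22 : ∀ k, pderiv k (pderiv 2 (pderiv 2 C)) = MvPolynomial.C (l22 * v k) :=
    fun k => hD k _ _ h22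
  have Qd1 : ∀ k, pderiv k (pderiv 1 Q) = MvPolynomial.C (a1 * v k) := fun k => hD k _ _ ha1
  have Qd2 : ∀ k, pderiv k (pderiv 2 Q) = MvPolynomial.C (a2 * v k) := fun k => hD k _ _ ha2
  have Pm : ∀ k, pderiv k (pderiv 0 Q) - pderiv k (pderiv 2 (pderiv 1 C)) =
      MvPolynomial.C (mu * v k) := by
    intro k
    have hk := hD k _ _ hmix
    rw [map_sub] at hk
    exact hk
  have Cinj : ∀ x y : ℂ, (MvPolynomial.C x : MvPolynomial (Fin 3) ℂ) = MvPolynomial.C y →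
      x = y := fun x y hxy => MvPolynomial.C_injective (Fin 3) ℂ hxy
  have E1 : l00 * v 1 = l01 * v 0 :=
    Cinj _ _ ((P00 1).symm.trans ((pderiv_comm (p := pderiv 0 C) 1 0).trans (P01 0)))
  have E2 : l00 * v 2 = l02 * v 0 :=
    Cinj _ _ ((P00 2).symm.trans ((pderiv_comm (p := pderiv 0 C) 2 0).trans (P02 0)))
  have E3 : l01 * v 1 = l11 * v 0 :=
    Cinj _ _ ((P01 1).symm.trans
      (((congrArg (pderiv 1) (pderiv_comm (p := C) 1 0)).trans
        (pderiv_comm (p := pderiv 1 C) 1 0)).trans (P11 0)))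
  have E4 : l02 * v 2 = l22 * v 0 :=
    Cinj _ _ ((P02 2).symm.trans
      (((congrArg (pderiv 2) (pderiv_comm (p := C) 2 0)).trans
        (pderiv_comm (p := pderiv 2 C) 2 0)).trans (P22 0)))
  have E5 : l01 * v 2 = l02 * v 1 :=
    Cinj _ _ ((P01 2).symm.trans ((pderiv_comm (p := pderiv 0 C) 2 1).trans (P02 1)))
  have E9 : a1 * v 2 = a2 * v 1 :=
    Cinj _ _ ((Qd1 2).symm.trans ((pderiv_comm (p := Q) 2 1).trans (Qd2 1)))
  have c120 : pderiv 0 (pderiv 2 (pderiv 1 C)) = MvPolynomial.C (l01 * v 2) :=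
    (pderiv_comm (p := pderiv 1 C) 0 2).trans
      ((congrArg (pderiv 2) (pderiv_comm (p := C) 0 1)).trans (P01 2))
  have c121 : pderiv 1 (pderiv 2 (pderiv 1 C)) = MvPolynomial.C (l11 * v 2) :=
    (pderiv_comm (p := pderiv 1 C) 1 2).trans (P11 2)
  have c122 : pderiv 2 (pderiv 2 (pderiv 1 C)) = MvPolynomial.C (l22 * v 1) :=
    (congrArg (pderiv 2) (pderiv_comm (p := C) 2 1)).trans
      ((pderiv_comm (p := pderiv 2 C) 2 1).trans (P22 1))
  have hQ01 : pderiv 1 (pderiv 0 Q) = MvPolynomial.C (a1 * v 0) :=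
    (pderiv_comm (p := Q) 1 0).trans (Qd1 0)
  have hQ02 : pderiv 2 (pderiv 0 Q) = MvPolynomial.C (a2 * v 0) :=
    (pderiv_comm (p := Q) 2 0).trans (Qd2 0)
  have hQ00 : pderiv 0 (pderiv 0 Q) = MvPolynomial.C (mu * v 0 + l01 * v 2) := by
    have hk := Pm 0
    rw [c120, sub_eq_iff_eq_add] at hk
    rw [hk, ← map_add]
  have E6 : a1 * v 0 - l11 * v 2 = mu * v 1 := by
    have hk := Pm 1
    rw [hQ01, c121, ← map_sub] at hk
    exact Cinj _ _ hk
  have E7 : a2 * v 0 - l22 * v 1 = mu * v 2 := by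
    have hk := Pm 2
    rw [hQ02, c122, ← map_sub] at hk
    exact Cinj _ _ hk
  have hDL2 : ∀ (a : ℂ) (i j : Fin 3), pderiv i (pderiv j (a • L ^ 2)) =
      MvPolynomial.C (2 * a * (v i * v j)) := by
    intro a i j
    simp only [smul_eq_C_mul, sq, pderiv_C_mul, pderiv_mul, hL, pderiv_C, mul_zero,
      add_zero, zero_add, map_add, map_mul, map_ofNat, map_zero, zero_mul]
    ring
  have hDL3 : ∀ (b : ℂ) (i j k : Fin 3), pderiv i (pderiv j (pderiv k (b • L ^ 3))) =
      MvPolynomial.C (6 * b * (v i * v j * v k)) := by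
    intro b i j k
    have e1 : pderiv k (b • L ^ 3) = (3 * b * v k) • L ^ 2 := by
      rw [smul_eq_C_mul, pderiv_C_mul, pderiv_pow, hL k, smul_eq_C_mul]
      norm_num
      simp only [map_mul, map_ofNat]
      ring
    rw [e1, hDL2]
    congr 1
    ring
  have hvc : v 0 ≠ 0 ∨ (v 0 = 0 ∧ v 1 ≠ 0) ∨ (v 0 = 0 ∧ v 1 = 0 ∧ v 2 ≠ 0) := by
    rcases eq_or_ne (v 0) 0 with h0 | h0
    · rcases eq_or_ne (v 1) 0 with h1 | h1
      · rcases eq_or_ne (v 2) 0 with h2 | h2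
        · exfalso
          apply hv
          funext i
          fin_cases i <;> simp only [Pi.zero_apply] <;> assumption
        · exact Or.inr (Or.inr ⟨h0, h1, h2⟩)
      · exact Or.inr (Or.inl ⟨h0, h1⟩)
    · exact Or.inl h0
  obtain ⟨a, b, S1, S2, S3, T00, T01, T02, T11, T22⟩ :
      ∃ a b : ℂ, a1 = 2 * a * v 1 ∧ a2 = 2 * a * v 2 ∧
        mu * v 0 + l01 * v 2 = 2 * a * (v 0 * v 0) ∧
        l00 = 6 * b * (v 0 * v 0) ∧ l01 = 6 * b * (v 0 * v 1) ∧ l02 = 6 * b * (v 0 * v 2) ∧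
        l11 = 6 * b * (v 1 * v 1) ∧ l22 = 6 * b * (v 2 * v 2) := by
    rcases hvc with h0 | ⟨h0, h1⟩ | ⟨h0, h1, h2⟩
    · refine ⟨(mu * v 0 + l01 * v 2) / (2 * (v 0 * v 0)), l00 / (6 * (v 0 * v 0)),
        ?_, ?_, ?_, ?_, ?_, ?_, ?_, ?_⟩
      · field_simp
        linear_combination v 0 * E6 - v 2 * E3
      · field_simp
        linear_combination v 0 * E7 - v 1 * E4 - v 2 * E5
      · field_simp
      · field_simp
      · field_simp
        linear_combination -E1
      · field_simp
        linear_combination -E2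
      · field_simp
        linear_combination -(v 0 * E3) - v 1 * E1
      · field_simp
        linear_combination -(v 0 * E4) - v 2 * E2
    · have k01 : l01 = 0 := by
        have hz : l01 * v 1 = 0 := by linear_combination E3 + l11 * h0
        exact (mul_eq_zero.mp hz).resolve_right h1
      have k00 : l00 = 0 := by
        have hz : l00 * v 1 = 0 := by linear_combination E1 + l01 * h0
        exact (mul_eq_zero.mp hz).resolve_right h1
      have k02 : l02 = 0 := by
        have hz : l02 * v 1 = 0 := by linear_combination -E5 + k01 * v 2
        exact (mul_eq_zero.mp hz).resolve_right h1
      refine ⟨a1 / (2 * v 1), l11 / (6 * (v 1 * v 1)), ?_, ?_, ?_, ?_, ?_, ?_, ?_, ?_⟩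
      · field_simp
      · field_simp
        linear_combination (-1 : ℂ) * E9
      · rw [h0, k01]
        ring
      · rw [k00, h0]
        ring
      · rw [k01, h0]
        ring
      · rw [k02, h0]
        ring
      · field_simp
      · field_simp
        linear_combination -(v 1 * E7) + v 2 * E6 + (a2 * v 1 - a1 * v 2) * h0
    · have k00 : l00 = 0 := by
        have hz : l00 * v 2 = 0 := by linear_combination E2 + l02 * h0
        exact (mul_eq_zero.mp hz).resolve_right h2
      have k01 : l01 = 0 := by
        have hz : l01 * v 2 = 0 := by linear_combination E5 + l02 * h1
        exact (mul_eq_zero.mp hz).resolve_right h2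
      have k02 : l02 = 0 := by
        have hz : l02 * v 2 = 0 := by linear_combination E4 + l22 * h0
        exact (mul_eq_zero.mp hz).resolve_right h2
      have k11 : l11 = 0 := by
        have hz : l11 * v 2 = 0 := by linear_combination -E6 + a1 * h0 - mu * h1
        exact (mul_eq_zero.mp hz).resolve_right h2
      have ka1 : a1 = 0 := by
        have hz : a1 * v 2 = 0 := by linear_combination E9 + a2 * h1
        exact (mul_eq_zero.mp hz).resolve_right h2
      refine ⟨a2 / (2 * v 2), l22 / (6 * (v 2 * v 2)), ?_, ?_, ?_, ?_, ?_, ?_, ?_, ?_⟩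
      · rw [ka1, h1]
        ring
      · field_simp
      · rw [h0, k01]
        ring
      · rw [k00, h0]
        ring
      · rw [k01, h0]
        ring
      · rw [k02, h0]
        ring
      · rw [k11, h1]
        ring
      · field_simp
  have hL2hom : ((a : ℂ) • L ^ 2).IsHomogeneous 2 := by
    rw [smul_eq_C_mul]
    exact IsHomogeneous.C_mul (by simpa using hLhom.pow 2) a
  have hL3hom : ((b : ℂ) • L ^ 3).IsHomogeneous 3 := by
    rw [smul_eq_C_mul]
    exact IsHomogeneous.C_mul (by simpa using hLhom.pow 3) b
  constructor
  · refine ⟨a, eq_of_pderiv2 hQ hL2hom ?_⟩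
    intro i j
    rw [hDL2 a i j]
    fin_cases i <;> fin_cases j
    · show pderiv 0 (pderiv 0 Q) = MvPolynomial.C (2 * a * (v 0 * v 0))
      exact (hQ00).trans (congrArg MvPolynomial.C (by linear_combination S3))
    · show pderiv 0 (pderiv 1 Q) = MvPolynomial.C (2 * a * (v 0 * v 1))
      exact (Qd1 0).trans (congrArg MvPolynomial.C (by linear_combination v 0 * S1))
    · show pderiv 0 (pderiv 2 Q) = MvPolynomial.C (2 * a * (v 0 * v 2))
      exact (Qd2 0).trans (congrArg MvPolynomial.C (by linear_combination v 0 * S2))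
    · show pderiv 1 (pderiv 0 Q) = MvPolynomial.C (2 * a * (v 1 * v 0))
      exact (hQ01).trans (congrArg MvPolynomial.C (by linear_combination v 0 * S1))
    · show pderiv 1 (pderiv 1 Q) = MvPolynomial.C (2 * a * (v 1 * v 1))
      exact (Qd1 1).trans (congrArg MvPolynomial.C (by linear_combination v 1 * S1))
    · show pderiv 1 (pderiv 2 Q) = MvPolynomial.C (2 * a * (v 1 * v 2))
      exact (Qd2 1).trans (congrArg MvPolynomial.C (by linear_combination v 1 * S2))
    · show pderiv 2 (pderiv 0 Q) = MvPolynomial.C (2 * a * (v 2 * v 0))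
      exact (hQ02).trans (congrArg MvPolynomial.C (by linear_combination v 0 * S2))
    · show pderiv 2 (pderiv 1 Q) = MvPolynomial.C (2 * a * (v 2 * v 1))
      exact (Qd1 2).trans (congrArg MvPolynomial.C (by linear_combination v 2 * S1))
    · show pderiv 2 (pderiv 2 Q) = MvPolynomial.C (2 * a * (v 2 * v 2))
      exact (Qd2 2).trans (congrArg MvPolynomial.C (by linear_combination v 2 * S2))
  · refine ⟨b, eq_of_pderiv3 hC hL3hom ?_⟩
    intro i j k
    rw [hDL3 b i j k]
    fin_cases i <;> fin_cases j <;> fin_cases k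
    · show pderiv 0 (pderiv 0 (pderiv 0 C)) = MvPolynomial.C (6 * b * (v 0 * v 0 * v 0))
      exact (P00 0).trans (congrArg MvPolynomial.C (by linear_combination v 0 * T00))
    · show pderiv 0 (pderiv 0 (pderiv 1 C)) = MvPolynomial.C (6 * b * (v 0 * v 0 * v 1))
      exact (congrArg (pderiv 0) (pderiv_comm (p := C) 0 1)).trans ((pderiv_comm (p := pderiv 0 C) 0 1).trans ((P00 1).trans (congrArg MvPolynomial.C (by linear_combination v 1 * T00))))
    · show pderiv 0 (pderiv 0 (pderiv 2 C)) = MvPolynomial.C (6 * b * (v 0 * v 0 * v 2))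
      exact (congrArg (pderiv 0) (pderiv_comm (p := C) 0 2)).trans ((pderiv_comm (p := pderiv 0 C) 0 2).trans ((P00 2).trans (congrArg MvPolynomial.C (by linear_combination v 2 * T00))))
    · show pderiv 0 (pderiv 1 (pderiv 0 C)) = MvPolynomial.C (6 * b * (v 0 * v 1 * v 0))
      exact (pderiv_comm (p := pderiv 0 C) 0 1).trans ((P00 1).trans (congrArg MvPolynomial.C (by linear_combination v 1 * T00)))
    · show pderiv 0 (pderiv 1 (pderiv 1 C)) = MvPolynomial.C (6 * b * (v 0 * v 1 * v 1))
      exact (pderiv_comm (p := pderiv 1 C) 0 1).trans ((congrArg (pderiv 1) (pderiv_comm (p := C) 0 1)).trans ((P01 1).trans (congrArg MvPolynomial.C (by linear_combination v 1 * T01))))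
    · show pderiv 0 (pderiv 1 (pderiv 2 C)) = MvPolynomial.C (6 * b * (v 0 * v 1 * v 2))
      exact (pderiv_comm (p := pderiv 2 C) 0 1).trans ((congrArg (pderiv 1) (pderiv_comm (p := C) 0 2)).trans ((pderiv_comm (p := pderiv 0 C) 1 2).trans ((P01 2).trans (congrArg MvPolynomial.C (by linear_combination v 2 * T01)))))
    · show pderiv 0 (pderiv 2 (pderiv 0 C)) = MvPolynomial.C (6 * b * (v 0 * v 2 * v 0))
      exact (pderiv_comm (p := pderiv 0 C) 0 2).trans ((P00 2).trans (congrArg MvPolynomial.C (by linear_combination v 2 * T00)))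
    · show pderiv 0 (pderiv 2 (pderiv 1 C)) = MvPolynomial.C (6 * b * (v 0 * v 2 * v 1))
      exact (pderiv_comm (p := pderiv 1 C) 0 2).trans ((congrArg (pderiv 2) (pderiv_comm (p := C) 0 1)).trans ((P01 2).trans (congrArg MvPolynomial.C (by linear_combination v 2 * T01))))
    · show pderiv 0 (pderiv 2 (pderiv 2 C)) = MvPolynomial.C (6 * b * (v 0 * v 2 * v 2))
      exact (pderiv_comm (p := pderiv 2 C) 0 2).trans ((congrArg (pderiv 2) (pderiv_comm (p := C) 0 2)).trans ((P02 2).trans (congrArg MvPolynomial.C (by linear_combination v 2 * T02))))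
    · show pderiv 1 (pderiv 0 (pderiv 0 C)) = MvPolynomial.C (6 * b * (v 1 * v 0 * v 0))
      exact (P00 1).trans (congrArg MvPolynomial.C (by linear_combination v 1 * T00))
    · show pderiv 1 (pderiv 0 (pderiv 1 C)) = MvPolynomial.C (6 * b * (v 1 * v 0 * v 1))
      exact (congrArg (pderiv 1) (pderiv_comm (p := C) 0 1)).trans ((P01 1).trans (congrArg MvPolynomial.C (by linear_combination v 1 * T01)))
    · show pderiv 1 (pderiv 0 (pderiv 2 C)) = MvPolynomial.C (6 * b * (v 1 * v 0 * v 2))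
      exact (congrArg (pderiv 1) (pderiv_comm (p := C) 0 2)).trans ((pderiv_comm (p := pderiv 0 C) 1 2).trans ((P01 2).trans (congrArg MvPolynomial.C (by linear_combination v 2 * T01))))
    · show pderiv 1 (pderiv 1 (pderiv 0 C)) = MvPolynomial.C (6 * b * (v 1 * v 1 * v 0))
      exact (P01 1).trans (congrArg MvPolynomial.C (by linear_combination v 1 * T01))
    · show pderiv 1 (pderiv 1 (pderiv 1 C)) = MvPolynomial.C (6 * b * (v 1 * v 1 * v 1))
      exact (P11 1).trans (congrArg MvPolynomial.C (by linear_combination v 1 * T11))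
    · show pderiv 1 (pderiv 1 (pderiv 2 C)) = MvPolynomial.C (6 * b * (v 1 * v 1 * v 2))
      exact (congrArg (pderiv 1) (pderiv_comm (p := C) 1 2)).trans ((pderiv_comm (p := pderiv 1 C) 1 2).trans ((P11 2).trans (congrArg MvPolynomial.C (by linear_combination v 2 * T11))))
    · show pderiv 1 (pderiv 2 (pderiv 0 C)) = MvPolynomial.C (6 * b * (v 1 * v 2 * v 0))
      exact (pderiv_comm (p := pderiv 0 C) 1 2).trans ((P01 2).trans (congrArg MvPolynomial.C (by linear_combination v 2 * T01)))
    · show pderiv 1 (pderiv 2 (pderiv 1 C)) = MvPolynomial.C (6 * b * (v 1 * v 2 * v 1))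
      exact (pderiv_comm (p := pderiv 1 C) 1 2).trans ((P11 2).trans (congrArg MvPolynomial.C (by linear_combination v 2 * T11)))
    · show pderiv 1 (pderiv 2 (pderiv 2 C)) = MvPolynomial.C (6 * b * (v 1 * v 2 * v 2))
      exact (P22 1).trans (congrArg MvPolynomial.C (by linear_combination v 1 * T22))
    · show pderiv 2 (pderiv 0 (pderiv 0 C)) = MvPolynomial.C (6 * b * (v 2 * v 0 * v 0))
      exact (P00 2).trans (congrArg MvPolynomial.C (by linear_combination v 2 * T00))
    · show pderiv 2 (pderiv 0 (pderiv 1 C)) = MvPolynomial.C (6 * b * (v 2 * v 0 * v 1))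
      exact (congrArg (pderiv 2) (pderiv_comm (p := C) 0 1)).trans ((P01 2).trans (congrArg MvPolynomial.C (by linear_combination v 2 * T01)))
    · show pderiv 2 (pderiv 0 (pderiv 2 C)) = MvPolynomial.C (6 * b * (v 2 * v 0 * v 2))
      exact (congrArg (pderiv 2) (pderiv_comm (p := C) 0 2)).trans ((P02 2).trans (congrArg MvPolynomial.C (by linear_combination v 2 * T02)))
    · show pderiv 2 (pderiv 1 (pderiv 0 C)) = MvPolynomial.C (6 * b * (v 2 * v 1 * v 0))
      exact (P01 2).trans (congrArg MvPolynomial.C (by linear_combination v 2 * T01))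
    · show pderiv 2 (pderiv 1 (pderiv 1 C)) = MvPolynomial.C (6 * b * (v 2 * v 1 * v 1))
      exact (P11 2).trans (congrArg MvPolynomial.C (by linear_combination v 2 * T11))
    · show pderiv 2 (pderiv 1 (pderiv 2 C)) = MvPolynomial.C (6 * b * (v 2 * v 1 * v 2))
      exact (pderiv_comm (p := pderiv 2 C) 2 1).trans ((P22 1).trans (congrArg MvPolynomial.C (by linear_combination v 1 * T22)))
    · show pderiv 2 (pderiv 2 (pderiv 0 C)) = MvPolynomial.C (6 * b * (v 2 * v 2 * v 0))
      exact (P02 2).trans (congrArg MvPolynomial.C (by linear_combination v 2 * T02))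
    · show pderiv 2 (pderiv 2 (pderiv 1 C)) = MvPolynomial.C (6 * b * (v 2 * v 2 * v 1))
      exact (congrArg (pderiv 2) (pderiv_comm (p := C) 2 1)).trans ((pderiv_comm (p := pderiv 2 C) 2 1).trans ((P22 1).trans (congrArg MvPolynomial.C (by linear_combination v 1 * T22))))
    · show pderiv 2 (pderiv 2 (pderiv 2 C)) = MvPolynomial.C (6 * b * (v 2 * v 2 * v 2))
      exact (P22 2).trans (congrArg MvPolynomial.C (by linear_combination v 2 * T22))
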